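/- Let m be a Borel measure on ℝ^d \ {0} with m({‖ξ‖ > 1}) < ∞ and ∫_{‖ξ‖>1} log‖ξ‖ m(dξ) < ∞. Let ψ : [0,∞) → ℂ^d satisfy ‖ψ(s)‖ ≤ c₁ e^{−c₂ s} and Re⟨ξ, ψ(s)⟩ ≤ 0 for all s ≥ 0 and all ξ with ‖ξ‖ > 1. Then ∫₀^∞ ∫_{‖ξ‖>1} |e^{⟨ξ,ψ(s)⟩} − 1| m(dξ) ds ≤ (c₁/c₂) m({‖ξ‖>1}) + (2/c₂) ∫_{‖ξ‖>1} log‖ξ‖ m(dξ) < ∞. -/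

import Mathlib

open MeasureTheory

noncomputable instance (d : ℕ) : MeasurableSpace (EuclideanSpace ℂ (Fin d)) :=
  MeasurableSpace.comap (WithLp.ofLp : EuclideanSpace ℂ (Fin d) → (Fin d → ℂ)) MeasurableSpace.pi

lemma abs_exp_sub_one_le_of_re_nonpos {z : ℂ} (hz : z.re ≤ 0) :
    ‖Complex.exp z - 1‖ ≤ ‖z‖ := by
  have hderiv : ∀ t ∈ Set.Icc (0:ℝ) 1,
      HasDerivWithinAt (fun t : ℝ => Complex.exp ((t:ℂ) * z))
        (Complex.exp ((t:ℂ) * z) * z) (Set.Icc 0 1) t := by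
    intro t _
    have h1 : HasDerivAt (fun t : ℝ => (t:ℂ) * z) z t := by
      simpa using (Complex.ofRealCLM.hasDerivAt (x := t)).mul_const z
    exact h1.cexp.hasDerivWithinAt
  have hbound : ∀ t ∈ Set.Ico (0:ℝ) 1, ‖Complex.exp ((t:ℂ) * z) * z‖ ≤ ‖z‖ := by
    intro t ht
    rw [norm_mul, Complex.norm_exp]
    have hre : ((t:ℂ) * z).re = t * z.re := by simp
    rw [hre]
    have : Real.exp (t * z.re) ≤ 1 := by
      rw [← Real.exp_zero]
      exact Real.exp_le_exp.mpr (mul_nonpos_of_nonneg_of_nonpos ht.1 hz)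
    nlinarith [norm_nonneg z, Real.exp_pos (t * z.re)]
  have h := norm_image_sub_le_of_norm_deriv_le_segment' hderiv hbound 1
    (Set.right_mem_Icc.2 zero_le_one)
  simpa using h

lemma abs_sum_le_norm_mul_norm {d : ℕ} (ξ : EuclideanSpace ℝ (Fin d))
    (v : EuclideanSpace ℂ (Fin d)) :
    ‖∑ i, (ξ i : ℂ) * v i‖ ≤ ‖ξ‖ * ‖v‖ := by
  classical
  set x : EuclideanSpace ℝ (Fin d) := WithLp.toLp 2 (fun i => |ξ i|) with hx
  set y : EuclideanSpace ℝ (Fin d) := WithLp.toLp 2 (fun i => ‖v i‖) with hy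
  have h1 : ‖∑ i, (ξ i : ℂ) * v i‖ ≤ ∑ i, |ξ i| * ‖v i‖ := by
    refine (norm_sum_le _ _).trans_eq ?_
    refine Finset.sum_congr rfl fun i _ => ?_
    rw [norm_mul, Complex.norm_real, Real.norm_eq_abs]
  have h2 : ∑ i, |ξ i| * ‖v i‖ = inner ℝ x y := by
    rw [PiLp.inner_apply]
    simp [hx, hy, RCLike.inner_apply]
    exact Finset.sum_congr rfl fun i _ => mul_comm _ _
  have h3 : (inner ℝ x y : ℝ) ≤ ‖x‖ * ‖y‖ := real_inner_le_norm x y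
  have h4 : ‖x‖ = ‖ξ‖ := by
    rw [EuclideanSpace.norm_eq, EuclideanSpace.norm_eq]
    congr 1
    refine Finset.sum_congr rfl fun i _ => ?_
    simp [hx, Real.norm_eq_abs, abs_abs]
  have h5 : ‖y‖ = ‖v‖ := by
    rw [EuclideanSpace.norm_eq, EuclideanSpace.norm_eq]
    congr 1
    refine Finset.sum_congr rfl fun i _ => ?_
    simp [hy, Real.norm_eq_abs, abs_norm]
  calc ‖∑ i, (ξ i : ℂ) * v i‖ ≤ ∑ i, |ξ i| * ‖v i‖ := h1
    _ = inner ℝ x y := h2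
    _ ≤ ‖x‖ * ‖y‖ := h3
    _ = ‖ξ‖ * ‖v‖ := by rw [h4, h5]

lemma key_pointwise {d : ℕ} (c₁ c₂ : ℝ) (hc₁ : 0 < c₁) (hc₂ : 0 < c₂)
    (ψ : ℝ → EuclideanSpace ℂ (Fin d))
    (hdecay : ∀ s : ℝ, 0 ≤ s → ‖ψ s‖ ≤ c₁ * Real.exp (-c₂ * s))
    (ξ : EuclideanSpace ℝ (Fin d)) (hξ : 1 < ‖ξ‖)
    (hre : ∀ s : ℝ, 0 ≤ s → (∑ i, (ξ i : ℂ) * ψ s i).re ≤ 0) :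
    ∫⁻ s in Set.Ioi (0:ℝ),
        ENNReal.ofReal ‖Complex.exp (∑ i, (ξ i : ℂ) * ψ s i) - 1‖
      ≤ ENNReal.ofReal (c₁ / c₂ + 2 / c₂ * Real.log ‖ξ‖) := by
  have hξ0 : (0:ℝ) < ‖ξ‖ := lt_trans one_pos hξ
  set L : ℝ := Real.log ‖ξ‖ with hL
  have hL0 : 0 < L := Real.log_pos hξ
  set s₀ : ℝ := L / c₂ with hs₀def
  have hs₀ : 0 < s₀ := div_pos hL0 hc₂
  set F : ℝ → ℝ := fun s => ‖Complex.exp (∑ i, (ξ i : ℂ) * ψ s i) - 1‖ with hF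
  have hsplit : Set.Ioi (0:ℝ) = Set.Ioc 0 s₀ ∪ Set.Ioi s₀ := (Set.Ioc_union_Ioi_eq_Ioi hs₀.le).symm
  rw [hsplit, lintegral_union measurableSet_Ioi (Set.Ioc_disjoint_Ioi le_rfl)]
  have part1 : ∫⁻ s in Set.Ioc 0 s₀, ENNReal.ofReal (F s) ≤ ENNReal.ofReal (2 * s₀) := by
    have hb : ∀ s ∈ Set.Ioc (0:ℝ) s₀, ENNReal.ofReal (F s) ≤ ENNReal.ofReal 2 := by
      intro s hs
      refine ENNReal.ofReal_le_ofReal ?_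
      have h1 : ‖Complex.exp (∑ i, (ξ i : ℂ) * ψ s i)‖ ≤ 1 := by
        rw [Complex.norm_exp, ← Real.exp_zero]
        exact Real.exp_le_exp.mpr (hre s hs.1.le)
      calc F s ≤ ‖Complex.exp (∑ i, (ξ i : ℂ) * ψ s i)‖ + ‖(1:ℂ)‖ :=
            (norm_sub_le _ _)
        _ ≤ 1 + 1 := by rw [norm_one]; exact add_le_add_left h1 1
        _ = 2 := by norm_num
    calc ∫⁻ s in Set.Ioc 0 s₀, ENNReal.ofReal (F s)
        ≤ ∫⁻ _ in Set.Ioc 0 s₀, ENNReal.ofReal 2 := setLIntegral_mono measurable_const hb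
      _ = ENNReal.ofReal 2 * volume (Set.Ioc 0 s₀) := setLIntegral_const _ _
      _ = ENNReal.ofReal 2 * ENNReal.ofReal s₀ := by rw [Real.volume_Ioc, sub_zero]
      _ = ENNReal.ofReal (2 * s₀) := (ENNReal.ofReal_mul (by norm_num)).symm
  have part2 : ∫⁻ s in Set.Ioi s₀, ENNReal.ofReal (F s) ≤ ENNReal.ofReal (c₁ / c₂) := by
    have hb : ∀ s ∈ Set.Ioi s₀, ENNReal.ofReal (F s)
        ≤ ENNReal.ofReal (c₁ * ‖ξ‖ * Real.exp (-c₂ * s)) := by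
      intro s hs
      have hs0 : (0:ℝ) ≤ s := (hs₀.trans hs).le
      refine ENNReal.ofReal_le_ofReal ?_
      calc F s ≤ ‖∑ i, (ξ i : ℂ) * ψ s i‖ :=
            abs_exp_sub_one_le_of_re_nonpos (hre s hs0)
        _ ≤ ‖ξ‖ * ‖ψ s‖ := abs_sum_le_norm_mul_norm ξ (ψ s)
        _ ≤ ‖ξ‖ * (c₁ * Real.exp (-c₂ * s)) :=
            mul_le_mul_of_nonneg_left (hdecay s hs0) (norm_nonneg _)
        _ = c₁ * ‖ξ‖ * Real.exp (-c₂ * s) := by ring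
    have hmeas : Measurable fun s : ℝ => ENNReal.ofReal (c₁ * ‖ξ‖ * Real.exp (-c₂ * s)) :=
      ENNReal.measurable_ofReal.comp
        (by fun_prop : Measurable fun s : ℝ => c₁ * ‖ξ‖ * Real.exp (-c₂ * s))
    have hint : IntegrableOn (fun s : ℝ => c₁ * ‖ξ‖ * Real.exp (-c₂ * s)) (Set.Ioi s₀) :=
      (exp_neg_integrableOn_Ioi s₀ hc₂).const_mul _
    have heq : ∫⁻ s in Set.Ioi s₀, ENNReal.ofReal (c₁ * ‖ξ‖ * Real.exp (-c₂ * s))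
        = ENNReal.ofReal (∫ s in Set.Ioi s₀, c₁ * ‖ξ‖ * Real.exp (-c₂ * s)) := by
      rw [← ofReal_integral_eq_lintegral_ofReal hint]
      exact Filter.Eventually.of_forall fun s => by positivity
    have hval : (∫ s in Set.Ioi s₀, c₁ * ‖ξ‖ * Real.exp (-c₂ * s)) = c₁ / c₂ := by
      rw [MeasureTheory.integral_const_mul]
      have : (∫ s in Set.Ioi s₀, Real.exp (-c₂ * s))
          = c₂⁻¹ * Real.exp (-(c₂ * s₀)) := by
        have h := integral_comp_mul_left_Ioi (fun u : ℝ => Real.exp (-u)) s₀ hc₂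
        simp only [smul_eq_mul] at h
        rw [show (fun s : ℝ => Real.exp (-c₂ * s)) = fun s : ℝ => Real.exp (-(c₂ * s)) by
          funext s; rw [neg_mul]]
        rw [h, integral_exp_neg_Ioi]
      rw [this]
      have he : Real.exp (-(c₂ * s₀)) = ‖ξ‖⁻¹ := by
        rw [hs₀def, mul_div_cancel₀ _ hc₂.ne', Real.exp_neg, hL, Real.exp_log hξ0]
      rw [he]
      field_simp
    calc ∫⁻ s in Set.Ioi s₀, ENNReal.ofReal (F s)
        ≤ ∫⁻ s in Set.Ioi s₀, ENNReal.ofReal (c₁ * ‖ξ‖ * Real.exp (-c₂ * s)) :=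
          setLIntegral_mono hmeas hb
      _ = ENNReal.ofReal (c₁ / c₂) := by rw [heq, hval]
  calc (∫⁻ s in Set.Ioc 0 s₀, ENNReal.ofReal (F s)) + ∫⁻ s in Set.Ioi s₀, ENNReal.ofReal (F s)
      ≤ ENNReal.ofReal (2 * s₀) + ENNReal.ofReal (c₁ / c₂) := add_le_add part1 part2
    _ = ENNReal.ofReal (2 * s₀ + c₁ / c₂) := (ENNReal.ofReal_add (by positivity) (by positivity)).symm
    _ = ENNReal.ofReal (c₁ / c₂ + 2 / c₂ * L) := by
        congr 1
        rw [hs₀def]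
        ring

/-- Integrated big-jump estimate: under exponential decay of `ψ` and a `log`-moment
condition on the measure `m` outside the unit ball, the double integral of
`|e^{⟨ξ,ψ(s)⟩} - 1|` is bounded by `(c₁/c₂) m({‖ξ‖>1}) + (2/c₂) ∫ log‖ξ‖ dm`. -/
theorem stmt6 (d : ℕ) (c₁ c₂ : ℝ) (hc₁ : 0 < c₁) (hc₂ : 0 < c₂)
    (m : Measure (EuclideanSpace ℝ (Fin d))) (hm0 : m {0} = 0)
    (hfin : m {ξ : EuclideanSpace ℝ (Fin d) | 1 < ‖ξ‖} < ⊤)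
    (hlog : IntegrableOn (fun ξ : EuclideanSpace ℝ (Fin d) => Real.log ‖ξ‖)
      {ξ : EuclideanSpace ℝ (Fin d) | 1 < ‖ξ‖} m)
    (ψ : ℝ → EuclideanSpace ℂ (Fin d)) (hψ : Measurable ψ)
    (hdecay : ∀ s : ℝ, 0 ≤ s → ‖ψ s‖ ≤ c₁ * Real.exp (-c₂ * s))
    (hre : ∀ s : ℝ, 0 ≤ s → ∀ ξ : EuclideanSpace ℝ (Fin d), 1 < ‖ξ‖ →
      (∑ i, (ξ i : ℂ) * ψ s i).re ≤ 0) :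
    (∫ s in Set.Ioi (0:ℝ), ∫ ξ in {ξ : EuclideanSpace ℝ (Fin d) | 1 < ‖ξ‖},
        ‖Complex.exp (∑ i, (ξ i : ℂ) * ψ s i) - 1‖ ∂m) ≤
      c₁ / c₂ * (m {ξ : EuclideanSpace ℝ (Fin d) | 1 < ‖ξ‖}).toReal +
        2 / c₂ * ∫ ξ in {ξ : EuclideanSpace ℝ (Fin d) | 1 < ‖ξ‖}, Real.log ‖ξ‖ ∂m := by
  classical
  set A : Set (EuclideanSpace ℝ (Fin d)) := {ξ | 1 < ‖ξ‖} with hAdef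
  have hA : MeasurableSet A := (isOpen_lt continuous_const continuous_norm).measurableSet
  set μ : Measure (EuclideanSpace ℝ (Fin d)) := m.restrict A with hμ
  haveI : IsFiniteMeasure μ := ⟨by rw [hμ, Measure.restrict_apply_univ]; exact hfin⟩
  set F : ℝ × EuclideanSpace ℝ (Fin d) → ℝ :=
    fun p => ‖Complex.exp (∑ i, (p.2 i : ℂ) * ψ p.1 i) - 1‖ with hFdef
  have hsum_meas : Measurable fun p : ℝ × EuclideanSpace ℝ (Fin d) =>
      (∑ i, (p.2 i : ℂ) * ψ p.1 i) := by
    refine Finset.measurable_sum _ fun i _ => Measurable.mul ?_ ?_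
    · exact Complex.measurable_ofReal.comp ((measurable_pi_apply i).comp ((WithLp.measurable_ofLp 2 _).comp measurable_snd))
    · exact (measurable_pi_apply i).comp ((WithLp.measurable_ofLp 2 _).comp (hψ.comp measurable_fst))
  have hFmeas : Measurable F := by
    have h1 : Measurable (fun p : ℝ × EuclideanSpace ℝ (Fin d) =>
        Complex.exp (∑ i, (p.2 i : ℂ) * ψ p.1 i) - 1) :=
      (Complex.measurable_exp.comp hsum_meas).sub measurable_const
    exact h1.norm
  -- nonnegativity of the log integral and of B
  have hlogμ : Integrable (fun ξ : EuclideanSpace ℝ (Fin d) => Real.log ‖ξ‖) μ := hlog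
  have hintB : Integrable
      (fun ξ : EuclideanSpace ℝ (Fin d) => c₁ / c₂ + 2 / c₂ * Real.log ‖ξ‖) μ :=
    (integrable_const _).add (hlogμ.const_mul _)
  set B : ℝ := c₁ / c₂ * (m A).toReal + 2 / c₂ * ∫ ξ in A, Real.log ‖ξ‖ ∂m with hB
  have hBeq : ∫ ξ, (c₁ / c₂ + 2 / c₂ * Real.log ‖ξ‖) ∂μ = B := by
    rw [integral_add (integrable_const _) (hlogμ.const_mul _), integral_const,
      integral_const_mul, hμ, measureReal_def, Measure.restrict_apply_univ]
    rw [hB]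
    ring_nf
  have hBnonneg : 0 ≤ B := by
    have h2 : 0 ≤ ∫ ξ in A, Real.log ‖ξ‖ ∂m :=
      setIntegral_nonneg hA fun ξ hξ => Real.log_nonneg (le_of_lt hξ)
    have := ENNReal.toReal_nonneg (a := m A)
    rw [hB]
    positivity
  have hkey : ∫⁻ s in Set.Ioi (0:ℝ), ∫⁻ ξ, ENNReal.ofReal (F (s, ξ)) ∂μ
      ≤ ENNReal.ofReal B := by
    rw [lintegral_lintegral_swap (f := fun (s : ℝ) (ξ : EuclideanSpace ℝ (Fin d)) =>
      ENNReal.ofReal (F (s, ξ)))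
      (by exact (ENNReal.measurable_ofReal.comp hFmeas).aemeasurable)]
    calc ∫⁻ ξ, (∫⁻ s in Set.Ioi (0:ℝ), ENNReal.ofReal (F (s, ξ))) ∂μ
        ≤ ∫⁻ ξ, ENNReal.ofReal (c₁ / c₂ + 2 / c₂ * Real.log ‖ξ‖) ∂μ := by
          refine lintegral_mono_ae ?_
          filter_upwards [ae_restrict_mem hA] with ξ hξA
          exact key_pointwise c₁ c₂ hc₁ hc₂ ψ hdecay ξ hξA fun s hs => hre s hs ξ hξA
      _ = ENNReal.ofReal (∫ ξ, (c₁ / c₂ + 2 / c₂ * Real.log ‖ξ‖) ∂μ) := by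
          refine (ofReal_integral_eq_lintegral_ofReal hintB ?_).symm
          filter_upwards [ae_restrict_mem hA] with ξ hξA
          have := Real.log_nonneg (le_of_lt hξA)
          positivity
      _ = ENNReal.ofReal B := by rw [hBeq]
  set g : ℝ → ℝ := fun s => ∫ ξ, F (s, ξ) ∂μ with hg
  have hgnn : ∀ s, 0 ≤ g s := fun s => integral_nonneg fun ξ => norm_nonneg _
  have hgmeas : StronglyMeasurable g := hFmeas.stronglyMeasurable.integral_prod_right'
  have hle1 : ∫⁻ s in Set.Ioi (0:ℝ), ENNReal.ofReal (g s) ≤ ENNReal.ofReal B := by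
    refine le_trans (lintegral_mono fun s => ?_) hkey
    calc ENNReal.ofReal (g s) ≤ ‖g s‖ₑ := Real.ofReal_le_enorm _
      _ ≤ ∫⁻ ξ, ‖F (s, ξ)‖ₑ ∂μ := enorm_integral_le_lintegral_enorm _
      _ = ∫⁻ ξ, ENNReal.ofReal (F (s, ξ)) ∂μ :=
          lintegral_congr fun ξ => Real.enorm_eq_ofReal (norm_nonneg _)
  have heq2 : ∫ s in Set.Ioi (0:ℝ), g s
      = (∫⁻ s in Set.Ioi (0:ℝ), ENNReal.ofReal (g s)).toReal :=
    integral_eq_lintegral_of_nonneg_ae (Filter.Eventually.of_forall hgnn)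
      hgmeas.aestronglyMeasurable
  show ∫ s in Set.Ioi (0:ℝ), g s ≤ B
  rw [heq2]
  calc (∫⁻ s in Set.Ioi (0:ℝ), ENNReal.ofReal (g s)).toReal
      ≤ (ENNReal.ofReal B).toReal := ENNReal.toReal_mono ENNReal.ofReal_ne_top hle1
    _ = B := ENNReal.toReal_ofReal hBnonneg
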